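/- A vector w ∈ V satisfies P†P w = w if and only if P w = w and P† w = w. -/

import Mathlib

/-- A vector `w` satisfies `P†P w = w` if and only if `P w = w` and `P† w = w`. -/
theorem statement7 {V : Type*} [NormedAddCommGroup V] [InnerProductSpace ℝ V]
    [FiniteDimensional ℝ V] (P : V →ₗ[ℝ] V) (hP : P ∘ₗ P = P) (w : V) :
    (LinearMap.adjoint P ∘ₗ P) w = w ↔ (P w = w ∧ LinearMap.adjoint P w = w) := by
  constructor
  · intro h
    simp only [LinearMap.comp_apply] at h
    have hPP : P (P w) = P w := by
      have := congrArg (fun f => f w) hP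
      simpa [LinearMap.comp_apply] using this
    -- ⟪P w, P w⟫ = ⟪w, w⟫
    have h1 : (inner ℝ (P w) (P w) : ℝ) = inner ℝ w w := by
      rw [← LinearMap.adjoint_inner_left, h]
    -- ⟪P w, w⟫ = ⟪w, w⟫
    have h2 : (inner ℝ (P w) w : ℝ) = inner ℝ w w := by
      calc (inner ℝ (P w) w : ℝ) = inner ℝ (P w) (LinearMap.adjoint P (P w)) := by rw [h]
        _ = inner ℝ (P (P w)) (P w) := LinearMap.adjoint_inner_right P _ _
        _ = inner ℝ (P w) (P w) := by rw [hPP]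
        _ = inner ℝ w w := h1
    have hPw : P w = w := by
      have hz : (inner ℝ (P w - w) (P w - w) : ℝ) = 0 := by
        rw [inner_sub_sub_self]
        rw [real_inner_comm w (P w)] at *
        rw [h1, h2]; ring
      have := inner_self_eq_zero.mp hz
      exact sub_eq_zero.mp this
    refine ⟨hPw, ?_⟩
    rw [← hPw, h, hPw]
  · rintro ⟨h1, h2⟩
    simp [LinearMap.comp_apply, h1, h2]
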